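/- Let t ∈ [0,1) be a dyadic rational and f ∈ L^1(G). Then there is a constant C (depending only on t and the absolute constant in the L^1-boundedness of the Walsh–Fejér means) such that for all n ≥ 1, E|σ̃_n^{(t)} f| ≤ C · E|f|, where σ̃_n^{(t)} f = (1/n) ∑_{k=0}^{n−1} S̃_k^{(t)} f is the conjugate Fejér mean. -/

import Mathlib

open MeasureTheory Finset

noncomputable section

/-- The dyadic group: countable product of ℤ/2. -/
abbrev G := ℕ → ZMod 2

/-- Binary digits of a real number, as an element of the dyadic group. -/
def toG (x : ℝ) : G := fun n => ((⌊x * 2 ^ (n + 1)⌋ : ℤ) : ZMod 2)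

/-- Haar (product) measure on the dyadic group, realized as the pushforward
of Lebesgue measure on `[0,1)` under the binary digit map. -/
def muG : Measure G := (volume.restrict (Set.Ico (0:ℝ) 1)).map toG

/-- Walsh–Paley functions. -/
def walsh (m : ℕ) (x : G) : ℝ :=
  ∏ k ∈ Finset.range m, if m.testBit k then (-1 : ℝ) ^ ((x k).val) else 1

/-- Walsh–Dirichlet kernel. -/
def Dir (n : ℕ) (x : G) : ℝ := ∑ k ∈ Finset.range n, walsh k x

/-- Dyadic interval `I_n` of rank `n` about `0`. -/
def Iset (n : ℕ) : Set G := {x | ∀ i < n, x i = 0}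

/-- `k`-th binary digit of `n`, as a natural number. -/
def bit (n k : ℕ) : ℕ := (n.testBit k).toNat

/-- `α_i(n) = |∑_{k<i} n_k 2^k − n_i 2^i|`. -/
def alpha (n i : ℕ) : ℤ :=
  |(∑ k ∈ Finset.range i, (bit n k : ℤ) * 2 ^ k) - (bit n i : ℤ) * 2 ^ i|

/-- Binary variation `V(n) = n_0 + ∑_{k≥1} |n_k − n_{k−1}|`. -/
def V (n : ℕ) : ℕ :=
  bit n 0 + ∑ k ∈ Finset.range n, if n.testBit (k+1) ≠ n.testBit k then 1 else 0

/-- `A(n)`: indices where consecutive binary digits differ (with `n_{−1} = 0`). -/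
def Aset (n : ℕ) : Finset ℕ :=
  (Finset.range (n+1)).filter
    (fun i => if i = 0 then n.testBit 0 else n.testBit i ≠ n.testBit (i-1))

/-- `S(n) = ∑_{i ∈ A(n)} α_i(n)/2^{i+1}`. -/
def S (n : ℕ) : ℝ := ∑ i ∈ Aset n, (alpha n i : ℝ) / 2 ^ (i+1)

/-- `j`-th binary digit of a real number `t ∈ [0,1)`. -/
def tdig (t : ℝ) (j : ℕ) : ℕ := (⌊t * 2 ^ (j+1)⌋ % 2).toNat

/-- `m = ∑_{i=0}^{N-1} t_{i+1} 2^i`. -/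
def mOf (t : ℝ) (N : ℕ) : ℕ := ∑ i ∈ Finset.range N, tdig t (i+1) * 2 ^ i

/-- Conjugate Walsh–Dirichlet kernel
`D̃_n^{(t)} = D_n − 2 w_m D_m − 2 t_{N+1}(D_n − D_{2^N})` where `m = mOf t N`. -/
def Dconj (t : ℝ) (N n : ℕ) (x : G) : ℝ :=
  Dir n x - 2 * walsh (mOf t N) x * Dir (mOf t N) x
    - 2 * (tdig t (N+1) : ℝ) * (Dir n x - Dir (2^N) x)

/-- Lebesgue constant of the conjugate transform. -/
def Leb (t : ℝ) (N n : ℕ) : ℝ := ∫ x, |Dconj t N n x| ∂muG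

/-- `T(a,b) = {i : 1 ≤ i ≤ N−1, a_i ≠ a_{i−1}, b_i = b_{i−1}}`. -/
def Tset (N a b : ℕ) : Finset ℕ :=
  (Finset.Icc 1 (N-1)).filter
    (fun i => a.testBit i ≠ a.testBit (i-1) ∧ b.testBit i = b.testBit (i-1))

/-- Walsh–Fourier coefficient. -/
def fcoef (f : G → ℝ) (i : ℕ) : ℝ := ∫ x, f x * walsh i x ∂muG

/-- `β_0(t) = (−1)^{t_0}`, `β_k(t) = (−1)^{t_n}` for `2^{n−1} ≤ k < 2^n`. -/
def betaC (t : ℝ) (k : ℕ) : ℝ :=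
  if k = 0 then (-1 : ℝ) ^ (tdig t 0) else (-1 : ℝ) ^ (tdig t (Nat.log 2 k + 1))

/-- Conjugate partial sums `S̃_n^{(t)} f`. -/
def Stilde (t : ℝ) (f : G → ℝ) (n : ℕ) (x : G) : ℝ :=
  ∑ k ∈ Finset.range n, betaC t k * fcoef f k * walsh k x

/-- Conjugate Fejér means `σ̃_n^{(t)} f`. -/
def sigmaT (t : ℝ) (f : G → ℝ) (n : ℕ) (x : G) : ℝ :=
  (1 / (n : ℝ)) * ∑ k ∈ Finset.range n, Stilde t f k x

/-- `t` is a dyadic rational. -/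
def IsDyadicRat (t : ℝ) : Prop := ∃ p k : ℕ, t = (p : ℝ) / 2 ^ k

lemma walsh_eq_prod (m N : ℕ) (h : m ≤ N) (x : G) :
    walsh m x = ∏ k ∈ Finset.range N, if m.testBit k then (-1 : ℝ) ^ ((x k).val) else 1 := by
  rw [walsh, ← Finset.prod_range_mul_prod_Ico _ h]
  have : ∀ k ∈ Finset.Ico m N, (if m.testBit k then (-1 : ℝ) ^ ((x k).val) else 1) = 1 := by
    intro k hk
    rw [Nat.testBit_lt_two_pow (lt_of_le_of_lt (Finset.mem_Ico.1 hk).1 (Nat.lt_two_pow_self (n := k)))]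
    simp
  rw [Finset.prod_congr rfl this]; simp

lemma walsh_abs (m : ℕ) (x : G) : |walsh m x| = 1 := by
  rw [walsh, Finset.abs_prod]
  refine Finset.prod_eq_one (fun k _ => ?_)
  split <;> simp [abs_pow]

lemma walsh_le_one (m : ℕ) (x : G) : |walsh m x| ≤ 1 := le_of_eq (walsh_abs m x)

lemma neg_one_pow_val_add (a b : ZMod 2) :
    ((-1 : ℝ)) ^ ((a + b).val) = (-1) ^ a.val * (-1) ^ b.val := by
  rw [ZMod.val_add, ← neg_one_pow_eq_pow_mod_two, pow_add]

lemma walsh_mul (m : ℕ) (x y : G) : walsh m (x + y) = walsh m x * walsh m y := by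
  rw [walsh, walsh, walsh, ← Finset.prod_mul_distrib]
  refine Finset.prod_congr rfl (fun k _ => ?_)
  split
  · exact neg_one_pow_val_add (x k) (y k)
  · simp

lemma walsh_dep (m N : ℕ) (h : m ≤ N) (x y : G) (hxy : ∀ i < N, x i = y i) :
    walsh m x = walsh m y := by
  rw [walsh, walsh]
  refine Finset.prod_congr rfl (fun k hk => ?_)
  rw [hxy k (lt_of_lt_of_le (Finset.mem_range.1 hk) h)]

lemma measurable_walsh (m : ℕ) : Measurable (walsh m) := by
  refine Finset.measurable_prod _ (fun k _ => ?_)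
  by_cases h : m.testBit k
  · simp only [h, if_true]
    exact (Measurable.of_discrete (f := fun a : ZMod 2 => ((-1:ℝ)) ^ a.val)).comp (measurable_pi_apply k)
  · simp [h]

lemma walsh_pow_add (m k : ℕ) (hk : k < 2 ^ m) (x : G) :
    walsh (2 ^ m + k) x = walsh (2 ^ m) x * walsh k x := by
  have h1 : 2 ^ m + k ≤ 2 ^ (m + 1) := by
    have := Nat.pow_succ 2 m; omega
  rw [walsh_eq_prod _ (2 ^ (m+1)) h1, walsh_eq_prod (2^m) (2^(m+1)) (Nat.pow_le_pow_right (by norm_num) m.le_succ),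
    walsh_eq_prod k (2^(m+1)) (le_trans (le_of_lt hk) (Nat.pow_le_pow_right (by norm_num) m.le_succ)),
    ← Finset.prod_mul_distrib]
  refine Finset.prod_congr rfl (fun j _ => ?_)
  have ht : (2 ^ m + k).testBit j = if j < m then k.testBit j else Nat.testBit 1 (j - m) := by
    have := Nat.testBit_two_pow_mul_add 1 hk j
    simpa [mul_one, Nat.add_comm] using this
  have ht2 : (2 ^ m : ℕ).testBit j = decide (m = j) := Nat.testBit_two_pow
  by_cases hj : j < m
  · rw [ht, if_pos hj, ht2]
    have : ¬ (m = j) := by omega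
    simp [this]
  · rw [ht, if_neg hj, ht2]
    by_cases hjm : j = m
    · subst hjm
      simp [Nat.testBit_lt_two_pow (show k < 2 ^ j from hk)]
    · have h3 : Nat.testBit 1 (j - m) = false := by
        apply Nat.testBit_lt_two_pow
        have : 1 ≤ j - m := by omega
        calc 1 < 2 ^ 1 := by norm_num
        _ ≤ 2 ^ (j - m) := Nat.pow_le_pow_right (by norm_num) this
      have h4 : k.testBit j = false :=
        Nat.testBit_lt_two_pow (lt_of_lt_of_le hk (Nat.pow_le_pow_right (by norm_num) (le_of_not_gt hj)))
      simp [h3, h4, Ne.symm hjm]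

lemma measurable_toG : Measurable toG := by
  refine measurable_pi_lambda _ (fun n => ?_)
  exact Measurable.of_discrete.comp ((Int.measurable_floor).comp (measurable_id.mul_const _))

instance : IsProbabilityMeasure muG := by
  constructor
  rw [muG, Measure.map_apply measurable_toG MeasurableSet.univ]
  simp [Real.volume_Ico]

-- the key digit computation

lemma toG_digit (N j i : ℕ) (hi : i < N) (x : ℝ)
    (hx : (j : ℝ) / 2 ^ N ≤ x) (hx' : x < (j + 1 : ℝ) / 2 ^ N) :
    toG x i = ((j / 2 ^ (N - 1 - i) : ℕ) : ZMod 2) := by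
  have hd : (0:ℝ) < 2 ^ (N - 1 - i) := by positivity
  set d : ℕ := 2 ^ (N - 1 - i) with hdd
  have hNi : (2:ℝ) ^ N = 2 ^ (i + 1) * (d:ℝ) := by
    rw [hdd]; push_cast; rw [← pow_add]; congr 1; omega
  set q : ℕ := j / d with hq
  have hqd : q * d ≤ j := Nat.div_mul_le_self j d
  have hd0 : 0 < d := by positivity
  have hqd2 : j < (q + 1) * d := by
    have h1 := Nat.div_add_mod j d
    have h2 := Nat.mod_lt j hd0
    have h3 : (q + 1) * d = d * (j / d) + d := by rw [hq]; ring
    omega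
  have hfloor : ⌊x * 2 ^ (i + 1)⌋ = (q : ℤ) := by
    rw [Int.floor_eq_iff]
    constructor
    · calc ((q : ℤ) : ℝ) = (q : ℝ) := by push_cast; ring
      _ ≤ (j : ℝ) / d := by
          rw [le_div_iff₀ (by exact_mod_cast hd)]
          exact_mod_cast hqd
      _ ≤ x * 2 ^ (i + 1) := by
          rw [div_le_iff₀ (by exact_mod_cast hd)]
          calc (j : ℝ) ≤ x * 2 ^ N := by
                rw [← div_le_iff₀ (by positivity)] ; exact hx
          _ = x * 2 ^ (i+1) * d := by rw [hNi]; push_cast; ring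
    · calc x * 2 ^ (i+1) < ((j + 1 : ℝ) / 2 ^ N) * 2 ^ (i+1) := by
            apply mul_lt_mul_of_pos_right hx' (by positivity)
      _ = (j + 1 : ℝ) / d := by rw [hNi]; push_cast; field_simp
      _ ≤ (q : ℝ) + 1 := by
            rw [div_le_iff₀ (by exact_mod_cast hd)]
            have : (j:ℕ) + 1 ≤ (q + 1) * d := hqd2
            calc ((j:ℝ) + 1) = ((j + 1 : ℕ) : ℝ) := by push_cast; ring
            _ ≤ (((q+1) * d : ℕ) : ℝ) := by exact_mod_cast this
            _ = ((q:ℝ) + 1) * (d:ℝ) := by push_cast; ring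
  show ((⌊x * 2 ^ (i + 1)⌋ : ℤ) : ZMod 2) = _
  rw [hfloor, Int.cast_natCast, hq]

lemma natCast_zmod_two_testBit (j b : ℕ) :
    ((j / 2 ^ b : ℕ) : ZMod 2) = (((j.testBit b).toNat : ℕ) : ZMod 2) := by
  rw [Nat.testBit_eq_decide_div_mod_eq]
  rw [← ZMod.natCast_mod (j / 2 ^ b) 2]
  rcases Nat.mod_two_eq_zero_or_one (j / 2 ^ b) with h | h <;> simp [h]

/-- canonical point of the cylinder indexed by `j < 2^N` -/

def cpt (N j : ℕ) : G := toG ((j : ℝ) / 2 ^ N)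

lemma cpt_digit (N j i : ℕ) (hi : i < N) :
    cpt N j i = (((j.testBit (N - 1 - i)).toNat : ℕ) : ZMod 2) := by
  rw [cpt, toG_digit N j i hi _ le_rfl (by gcongr; linarith), natCast_zmod_two_testBit]

lemma cpt_digit_ge (N j i : ℕ) (hj : j < 2 ^ N) (hi : N ≤ i) : cpt N j i = 0 := by
  have h2 : ((j:ℝ) / 2 ^ N) * 2 ^ (i+1) = ((j * 2 ^ (i + 1 - N) : ℕ) : ℝ) := by
    have hpow : (2:ℝ) ^ (i+1) = 2 ^ N * 2 ^ (i+1-N) := by rw [← pow_add]; congr 1; omega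
    push_cast
    rw [hpow]
    field_simp
  have : cpt N j i = (((j * 2 ^ (i + 1 - N) : ℕ) : ℤ) : ZMod 2) := by
    rw [cpt]
    show ((⌊_ * _⌋ : ℤ) : ZMod 2) = _
    rw [h2, Int.floor_natCast]
  rw [this]
  have : (2 : ℕ) ∣ j * 2 ^ (i + 1 - N) := by
    apply Dvd.dvd.mul_left
    exact dvd_pow_self 2 (by omega)
  rcases this with ⟨c, hc⟩
  rw [hc]
  push_cast
  simp [show ((2:ZMod 2)) = 0 from rfl]

lemma toG_digit_agree (N j i : ℕ) (hi : i < N) (x : ℝ)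
    (hx : (j : ℝ) / 2 ^ N ≤ x) (hx' : x < (j + 1 : ℝ) / 2 ^ N) :
    toG x i = cpt N j i := by
  rw [toG_digit N j i hi x hx hx', cpt_digit N j i hi, natCast_zmod_two_testBit]

-- cylinder decomposition of [0,1)

lemma Ico_eq_biUnion (N : ℕ) :
    Set.Ico (0:ℝ) 1 = ⋃ j ∈ Finset.range (2^N), Set.Ico ((j:ℝ)/2^N) ((j+1:ℝ)/2^N) := by
  ext x
  simp only [Set.mem_Ico, Set.mem_iUnion, Finset.mem_range]
  constructor
  · rintro ⟨h0, h1⟩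
    refine ⟨⌊x * 2^N⌋.toNat, ?_, ?_, ?_⟩
    · have h4 : ⌊x * 2^N⌋ < ((2^N : ℕ) : ℤ) := by
        apply Int.floor_lt.2
        push_cast
        nlinarith [pow_pos (show (0:ℝ)<2 by norm_num) N]
      have hp : (0:ℕ) < 2^N := Nat.two_pow_pos N
      omega
    · rw [div_le_iff₀ (by positivity)]
      have h3 : (0:ℤ) ≤ ⌊x * 2^N⌋ := Int.floor_nonneg.2 (by positivity)
      have := Int.floor_le (x * 2^N)
      calc ((⌊x * 2^N⌋.toNat : ℕ) : ℝ) = ((⌊x * 2^N⌋ : ℤ) : ℝ) := by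
            exact_mod_cast congrArg (fun z : ℤ => (z : ℝ)) (Int.toNat_of_nonneg h3)
      _ ≤ x * 2^N := this
    · rw [lt_div_iff₀ (by positivity)]
      have h3 : (0:ℤ) ≤ ⌊x * 2^N⌋ := Int.floor_nonneg.2 (by positivity)
      have := Int.lt_floor_add_one (x * 2^N)
      calc x * 2^N < (⌊x * 2^N⌋ : ℝ) + 1 := this
      _ = ((⌊x * 2^N⌋.toNat : ℕ) : ℝ) + 1 := by
            exact_mod_cast congrArg (fun z : ℤ => (z:ℝ) + 1) (Int.toNat_of_nonneg h3).symm
  · rintro ⟨j, hj, h0, h1⟩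
    constructor
    · exact le_trans (by positivity) h0
    · calc x < (j+1:ℝ)/2^N := h1
      _ ≤ (2^N : ℝ)/2^N := by
          gcongr
          exact_mod_cast Nat.succ_le_of_lt hj
      _ = 1 := by field_simp

lemma integral_cylinder (N : ℕ) (g : G → ℝ) (hg : Measurable g)
    (hdep : ∀ x y : G, (∀ i < N, x i = y i) → g x = g y) :
    ∫ x, g x ∂muG = (2^N : ℝ)⁻¹ * ∑ j ∈ Finset.range (2^N), g (cpt N j) := by
  rw [muG, integral_map measurable_toG.aemeasurable hg.aestronglyMeasurable]
  have heq : ∀ j : ℕ, Set.EqOn (fun x : ℝ => g (toG x)) (fun _ => g (cpt N j))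
      (Set.Ico ((j:ℝ)/2^N) ((j+1:ℝ)/2^N)) := by
    intro j x hx
    exact hdep _ _ (fun i hi => toG_digit_agree N j i hi x hx.1 hx.2)
  have hvol : ∀ j : ℕ, volume (Set.Ico ((j:ℝ)/2^N) ((j+1:ℝ)/2^N)) = ENNReal.ofReal ((2^N:ℝ)⁻¹) := by
    intro j
    rw [Real.volume_Ico]
    congr 1
    field_simp
    ring
  calc ∫ x in Set.Ico (0:ℝ) 1, g (toG x)
      = ∫ x in ⋃ j ∈ Finset.range (2^N), Set.Ico ((j:ℝ)/2^N) ((j+1:ℝ)/2^N), g (toG x) := by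
        rw [← Ico_eq_biUnion]
    _ = ∑ j ∈ Finset.range (2^N), ∫ x in Set.Ico ((j:ℝ)/2^N) ((j+1:ℝ)/2^N), g (toG x) := by
        apply integral_biUnion_finset
        · intro i _; exact measurableSet_Ico
        · intro i _ j _ hij
          simp only [Function.onFun]
          rw [Set.Ico_disjoint_Ico]
          rcases lt_or_gt_of_ne hij with h | h
          · apply le_trans (min_le_left _ _)
            apply le_trans _ (le_max_right _ _)
            gcongr
            exact_mod_cast Nat.succ_le_of_lt h
          · apply le_trans (min_le_right _ _)
            apply le_trans _ (le_max_left _ _)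
            gcongr
            exact_mod_cast Nat.succ_le_of_lt h
        · intro j _
          apply (integrableOn_congr_fun (heq j) measurableSet_Ico).2
          apply (integrableOn_const_iff (by simp)).2
          right
          rw [hvol j]
          exact ENNReal.ofReal_lt_top
    _ = ∑ j ∈ Finset.range (2^N), (2^N : ℝ)⁻¹ * g (cpt N j) := by
        refine Finset.sum_congr rfl (fun j _ => ?_)
        rw [setIntegral_congr_fun measurableSet_Ico (heq j), setIntegral_const, measureReal_def, hvol j,
          ENNReal.toReal_ofReal (by positivity), smul_eq_mul]
    _ = (2^N : ℝ)⁻¹ * ∑ j ∈ Finset.range (2^N), g (cpt N j) := by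
        rw [Finset.mul_sum]

def extG (N : ℕ) (v : Fin N → ZMod 2) : G := fun i => if h : i < N then v ⟨i, h⟩ else 0

def dig (N j : ℕ) : Fin N → ZMod 2 :=
  fun i => (((j.testBit (N - 1 - i.val)).toNat : ℕ) : ZMod 2)

lemma extG_dig (N j : ℕ) (hj : j < 2^N) : extG N (dig N j) = cpt N j := by
  funext i
  by_cases hi : i < N
  · rw [extG]
    simp only [hi, dif_pos]
    rw [dig, cpt_digit N j i hi]
  · rw [cpt_digit_ge N j i hj (le_of_not_gt hi), extG]
    simp [hi]

lemma dig_injOn (N : ℕ) : ∀ x ∈ Finset.range (2^N), ∀ y ∈ Finset.range (2^N),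
    dig N x = dig N y → x = y := by
  intro x hx y hy h
  apply Nat.eq_of_testBit_eq
  intro b
  by_cases hb : b < N
  · have hcf := congrFun h ⟨N - 1 - b, by omega⟩
    rw [dig, dig] at hcf
    simp only at hcf
    have hb' : N - 1 - (N - 1 - b) = b := by omega
    rw [hb'] at hcf
    cases h1 : x.testBit b <;> cases h2 : y.testBit b
    · rfl
    · exfalso; rw [h1, h2] at hcf; simp at hcf
    · exfalso; rw [h1, h2] at hcf; simp at hcf
    · rfl
  · rw [Nat.testBit_lt_two_pow, Nat.testBit_lt_two_pow]
    · exact lt_of_lt_of_le (Finset.mem_range.1 hy) (Nat.pow_le_pow_right (by norm_num) (le_of_not_gt hb))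
    · exact lt_of_lt_of_le (Finset.mem_range.1 hx) (Nat.pow_le_pow_right (by norm_num) (le_of_not_gt hb))

lemma sum_cpt_eq_sum_extG (N : ℕ) (g : G → ℝ) :
    ∑ j ∈ Finset.range (2^N), g (cpt N j) = ∑ v : Fin N → ZMod 2, g (extG N v) := by
  have himg : Finset.image (dig N) (Finset.range (2^N)) = Finset.univ := by
    apply Finset.eq_univ_of_card
    rw [Finset.card_image_of_injOn (fun x hx y hy => dig_injOn N x hx y hy)]
    simp [Fintype.card_fun]
  calc ∑ j ∈ Finset.range (2^N), g (cpt N j)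
      = ∑ j ∈ Finset.range (2^N), g (extG N (dig N j)) := by
        refine Finset.sum_congr rfl (fun j hj => ?_)
        rw [extG_dig N j (Finset.mem_range.1 hj)]
    _ = ∑ v ∈ Finset.image (dig N) (Finset.range (2^N)), g (extG N v) := by
        rw [Finset.sum_image (dig_injOn N)]
    _ = ∑ v : Fin N → ZMod 2, g (extG N v) := by rw [himg]

lemma integral_cylinder' (N : ℕ) (g : G → ℝ) (hg : Measurable g)
    (hdep : ∀ x y : G, (∀ i < N, x i = y i) → g x = g y) :
    ∫ x, g x ∂muG = (2^N : ℝ)⁻¹ * ∑ v : Fin N → ZMod 2, g (extG N v) := by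
  rw [integral_cylinder N g hg hdep, sum_cpt_eq_sum_extG]

lemma measurable_add_G (u : G) : Measurable (fun x : G => x + u) := by
  refine measurable_pi_lambda _ (fun i => ?_)
  exact (Measurable.of_discrete (f := fun a : ZMod 2 => a + u i)).comp (measurable_pi_apply i)

lemma integral_translate (N : ℕ) (g : G → ℝ) (hg : Measurable g)
    (hdep : ∀ x y : G, (∀ i < N, x i = y i) → g x = g y) (u : G) :
    ∫ x, g (x + u) ∂muG = ∫ x, g x ∂muG := by
  rw [integral_cylinder' N g hg hdep,
    integral_cylinder' N (fun x => g (x + u)) (hg.comp (measurable_add_G u))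
      (fun x y hxy => hdep _ _ (fun i hi => by simp only [Pi.add_apply, hxy i hi]))]
  congr 1
  have key : ∀ v : Fin N → ZMod 2, g (extG N v + u) = g (extG N (v + (fun i => u i.val))) := by
    intro v
    apply hdep
    intro i hi
    simp only [Pi.add_apply, extG, dif_pos hi]
  calc ∑ v : Fin N → ZMod 2, g (extG N v + u)
      = ∑ v : Fin N → ZMod 2, g (extG N ((Equiv.addRight (fun i : Fin N => u i.val)) v)) := by
        refine Finset.sum_congr rfl (fun v _ => ?_)
        rw [key v]
        rfl
    _ = ∑ v : Fin N → ZMod 2, g (extG N v) :=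
        Equiv.sum_comp (Equiv.addRight (fun i : Fin N => u i.val)) (fun v => g (extG N v))

-- Part C : Fejér kernel estimates

def Afun (n : ℕ) (x : G) : ℝ := ∑ k ∈ Finset.range n, Dir k x

lemma measurable_Dir (n : ℕ) : Measurable (Dir n) :=
  Finset.measurable_sum _ (fun k _ => measurable_walsh k)

lemma measurable_Afun (n : ℕ) : Measurable (Afun n) :=
  Finset.measurable_sum _ (fun k _ => measurable_Dir k)

lemma Dir_abs_le (n : ℕ) (x : G) : |Dir n x| ≤ n := by
  calc |Dir n x| ≤ ∑ k ∈ Finset.range n, |walsh k x| := Finset.abs_sum_le_sum_abs _ _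
  _ = ∑ k ∈ Finset.range n, 1 := by simp [walsh_abs]
  _ = n := by simp

lemma Afun_abs_le (n : ℕ) (x : G) : |Afun n x| ≤ n * n := by
  calc |Afun n x| ≤ ∑ k ∈ Finset.range n, |Dir k x| := Finset.abs_sum_le_sum_abs _ _
  _ ≤ ∑ k ∈ Finset.range n, (n:ℝ) := by
      refine Finset.sum_le_sum (fun k hk => le_trans (Dir_abs_le k x) ?_)
      exact_mod_cast le_of_lt (Finset.mem_range.1 hk)
  _ = n * n := by simp [mul_comm]

lemma integrable_of_bounded (g : G → ℝ) (hg : Measurable g) (C : ℝ) (hb : ∀ x, |g x| ≤ C) :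
    Integrable g muG := by
  refine (integrable_const C).mono' hg.aestronglyMeasurable ?_
  exact Filter.Eventually.of_forall (fun x => by rw [Real.norm_eq_abs]; exact hb x)

lemma integrable_walsh (m : ℕ) : Integrable (walsh m) muG :=
  integrable_of_bounded _ (measurable_walsh m) 1 (walsh_le_one m)

lemma integrable_Dir (n : ℕ) : Integrable (Dir n) muG :=
  integrable_of_bounded _ (measurable_Dir n) n (Dir_abs_le n)

lemma integrable_Afun (n : ℕ) : Integrable (Afun n) muG :=
  integrable_of_bounded _ (measurable_Afun n) (n*n) (Afun_abs_le n)

lemma walsh_single (m i : ℕ) (hbit : m.testBit i = true) :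
    walsh m (fun k => if k = i then 1 else 0) = -1 := by
  have hge : 2 ^ i ≤ m := Nat.ge_two_pow_of_testBit hbit
  have him : i < m := lt_of_lt_of_le (Nat.lt_two_pow_self (n := i)) hge
  rw [walsh]
  rw [Finset.prod_eq_single i]
  · simp [hbit, show ((1:ZMod 2)).val = 1 from rfl]
  · intro k _ hk
    simp [hk, show ((0:ZMod 2)).val = 0 from rfl]
  · intro h
    exact absurd (Finset.mem_range.2 him) h

lemma integral_walsh (m : ℕ) : ∫ x, walsh m x ∂muG = if m = 0 then 1 else 0 := by
  by_cases hm : m = 0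
  · subst hm
    simp only [if_pos]
    have : walsh 0 = fun _ : G => (1:ℝ) := by funext x; rw [walsh]; simp
    rw [this]
    simp
  · rw [if_neg hm]
    rw [integral_cylinder' m (walsh m) (measurable_walsh m)
      (fun x y h => walsh_dep m m le_rfl x y h)]
    obtain ⟨i, hbit, -⟩ := Nat.exists_most_significant_bit hm
    have him : i < m := lt_of_lt_of_le (Nat.lt_two_pow_self (n := i)) (Nat.ge_two_pow_of_testBit hbit)
    set eG : G := fun k => if k = i then 1 else 0 with heG
    set w0 : Fin m → ZMod 2 := fun k => if k.val = i then 1 else 0 with hw0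
    have hext : ∀ v : Fin m → ZMod 2, extG m (v + w0) = extG m v + eG := by
      intro v
      funext k
      by_cases hk : k < m
      · simp only [extG, Pi.add_apply, dif_pos hk, heG, hw0]
      · simp only [extG, Pi.add_apply, dif_neg hk, heG]
        have : k ≠ i := by omega
        simp [this]
    have hS : ∑ v : Fin m → ZMod 2, walsh m (extG m v)
        = - ∑ v : Fin m → ZMod 2, walsh m (extG m v) := by
      conv_lhs => rw [← Equiv.sum_comp (Equiv.addRight w0) (fun v => walsh m (extG m v))]
      have : ∀ v : Fin m → ZMod 2, walsh m (extG m ((Equiv.addRight w0) v)) = - walsh m (extG m v) := by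
        intro v
        have : extG m (v + w0) = extG m v + eG := hext v
        calc walsh m (extG m ((Equiv.addRight w0) v)) = walsh m (extG m v + eG) := by
              rw [← this]; rfl
        _ = walsh m (extG m v) * walsh m eG := walsh_mul m _ _
        _ = - walsh m (extG m v) := by rw [heG, walsh_single m i hbit]; ring
      rw [Finset.sum_congr rfl (fun v _ => this v), Finset.sum_neg_distrib]
    have : ∑ v : Fin m → ZMod 2, walsh m (extG m v) = 0 := by linarith
    rw [this, mul_zero]

lemma integral_Dir (n : ℕ) : ∫ x, Dir n x ∂muG = if n = 0 then 0 else 1 := by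
  have : ∫ x, Dir n x ∂muG = ∑ k ∈ Finset.range n, ∫ x, walsh k x ∂muG := by
    rw [← integral_finset_sum _ (fun k _ => integrable_walsh k)]
    rfl
  rw [this]
  rw [Finset.sum_congr rfl (fun k _ => integral_walsh k)]
  rcases Nat.eq_zero_or_pos n with h | h
  · subst h; simp
  · rw [if_neg (by omega), Finset.sum_ite_eq' (Finset.range n) 0 (fun _ => (1:ℝ))]
    simp [Finset.mem_range.2 h]

lemma Dir_pow_add (m i : ℕ) (hi : i ≤ 2 ^ m) (x : G) :
    Dir (2 ^ m + i) x = Dir (2 ^ m) x + walsh (2 ^ m) x * Dir i x := by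
  rw [Dir, Finset.sum_range_add]
  congr 1
  rw [Dir, Finset.mul_sum]
  refine Finset.sum_congr rfl (fun a ha => ?_)
  exact walsh_pow_add m a (lt_of_lt_of_le (Finset.mem_range.1 ha) hi) x

lemma Afun_rec (m k : ℕ) (hk : k ≤ 2 ^ m) (x : G) :
    Afun (2 ^ m + k) x = Afun (2 ^ m) x + k * Dir (2 ^ m) x + walsh (2 ^ m) x * Afun k x := by
  rw [Afun, Finset.sum_range_add]
  have : ∀ i ∈ Finset.range k, Dir (2 ^ m + i) x = Dir (2 ^ m) x + walsh (2 ^ m) x * Dir i x :=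
    fun i hi => Dir_pow_add m i (le_trans (le_of_lt (Finset.mem_range.1 hi)) hk) x
  rw [Finset.sum_congr rfl this, Finset.sum_add_distrib, Finset.sum_const, ← Finset.mul_sum]
  rw [Afun, Afun]
  simp only [Finset.card_range, nsmul_eq_mul]
  ring

lemma Dir_one (x : G) : Dir 1 x = 1 := by
  rw [Dir]
  simp [walsh]

lemma Dir_two_pow_nonneg (m : ℕ) (x : G) : 0 ≤ Dir (2 ^ m) x := by
  induction m with
  | zero => rw [pow_zero, Dir_one]; norm_num
  | succ m ih =>
    have h2 : 2 ^ (m + 1) = 2 ^ m + 2 ^ m := by ring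
    rw [h2, Dir_pow_add m (2^m) le_rfl]
    have hw := abs_le.1 (walsh_le_one (2^m) x)
    nlinarith [ih]

lemma Afun_two_pow_nonneg (m : ℕ) (x : G) : 0 ≤ Afun (2 ^ m) x := by
  induction m with
  | zero =>
    rw [pow_zero, Afun]
    simp [Dir]
  | succ m ih =>
    have h2 : 2 ^ (m + 1) = 2 ^ m + 2 ^ m := by ring
    rw [h2, Afun_rec m (2^m) le_rfl]
    have hw := abs_le.1 (walsh_le_one (2^m) x)
    have hD := Dir_two_pow_nonneg m x
    have h2m : (0:ℝ) ≤ (2^m : ℕ) := by positivity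
    nlinarith [ih]

lemma integral_Afun_le (n : ℕ) : ∫ x, Afun n x ∂muG ≤ n := by
  have : ∫ x, Afun n x ∂muG = ∑ k ∈ Finset.range n, ∫ x, Dir k x ∂muG := by
    rw [← integral_finset_sum _ (fun k _ => integrable_Dir k)]
    rfl
  rw [this, Finset.sum_congr rfl (fun k _ => integral_Dir k)]
  calc ∑ k ∈ Finset.range n, (if k = 0 then (0:ℝ) else 1)
      ≤ ∑ k ∈ Finset.range n, 1 := by
        refine Finset.sum_le_sum (fun k _ => ?_)
        split <;> norm_num
  _ = n := by simp

lemma integral_abs_Afun (n : ℕ) : ∫ x, |Afun n x| ∂muG ≤ 4 * n := by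
  induction n using Nat.strong_induction_on with
  | _ n ih =>
    rcases Nat.eq_zero_or_pos n with h | h
    · subst h
      simp [Afun]
    · set m := Nat.log 2 n with hm
      have h2m : 2 ^ m ≤ n := Nat.pow_log_le_self 2 (by omega)
      have hlt : n < 2 ^ (m + 1) := Nat.lt_pow_succ_log_self (by norm_num) n
      set k := n - 2 ^ m with hk
      have hn : n = 2 ^ m + k := by omega
      have hk2 : k < 2 ^ m := by
        have : 2 ^ (m+1) = 2 ^ m + 2 ^ m := by ring
        omega
      have hkn : k < n := by omega
      -- pointwise bound
      have hpt : ∀ x, |Afun n x| ≤ Afun (2^m) x + (k:ℝ) * Dir (2^m) x + |Afun k x| := by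
        intro x
        rw [hn, Afun_rec m k (le_of_lt hk2) x]
        have hw : |walsh (2^m) x * Afun k x| = |Afun k x| := by
          rw [abs_mul, walsh_abs, one_mul]
        calc |Afun (2^m) x + k * Dir (2^m) x + walsh (2^m) x * Afun k x|
            ≤ |Afun (2^m) x + k * Dir (2^m) x| + |walsh (2^m) x * Afun k x| := abs_add_le _ _
        _ = Afun (2^m) x + k * Dir (2^m) x + |Afun k x| := by
            rw [hw, abs_of_nonneg]
            have := Afun_two_pow_nonneg m x
            have := Dir_two_pow_nonneg m x
            positivity
      have hInt1 : Integrable (fun x => Afun (2^m) x + (k:ℝ) * Dir (2^m) x + |Afun k x|) muG := by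
        exact ((integrable_Afun (2^m)).add ((integrable_Dir (2^m)).const_mul _)).add (integrable_Afun k).abs
      have hInt0 : Integrable (fun x => |Afun n x|) muG := (integrable_Afun n).abs
      calc ∫ x, |Afun n x| ∂muG
          ≤ ∫ x, (Afun (2^m) x + (k:ℝ) * Dir (2^m) x + |Afun k x|) ∂muG :=
            integral_mono hInt0 hInt1 hpt
      _ = (∫ x, Afun (2^m) x ∂muG) + (k:ℝ) * (∫ x, Dir (2^m) x ∂muG) + ∫ x, |Afun k x| ∂muG := by
            have e1 : ∫ x, (Afun (2^m) x + (k:ℝ) * Dir (2^m) x + |Afun k x|) ∂muG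
                = (∫ x, (Afun (2^m) x + (k:ℝ) * Dir (2^m) x) ∂muG) + ∫ x, |Afun k x| ∂muG :=
              integral_add ((integrable_Afun (2^m)).add ((integrable_Dir (2^m)).const_mul _))
                (integrable_Afun k).abs
            have e2 : ∫ x, (Afun (2^m) x + (k:ℝ) * Dir (2^m) x) ∂muG
                = (∫ x, Afun (2^m) x ∂muG) + ∫ x, (k:ℝ) * Dir (2^m) x ∂muG :=
              integral_add (integrable_Afun (2^m)) ((integrable_Dir (2^m)).const_mul _)
            rw [e1, e2, MeasureTheory.integral_const_mul]
      _ ≤ (2^m : ℕ) + (k:ℝ) * 1 + 4 * k := by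
            have h1 := integral_Afun_le (2^m)
            have h2 : ∫ x, Dir (2^m) x ∂muG = 1 := by
              rw [integral_Dir]
              simp [(Nat.two_pow_pos m).ne']
            have h3 := ih k hkn
            rw [h2]
            push_cast
            push_cast at h1 h3
            linarith
      _ ≤ 4 * n := by
            have : (k:ℝ) < (2^m : ℕ) := by exact_mod_cast hk2
            have hnr : (n:ℝ) = (2^m : ℕ) + (k:ℝ) := by exact_mod_cast hn
            push_cast at this hnr ⊢
            linarith

lemma tdig_eq_zero (p K m : ℕ) (hm : K ≤ m) : tdig ((p:ℝ)/2^K) m = 0 := by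
  have h1 : ((p:ℝ)/2^K) * 2 ^ (m+1) = ((p * 2 ^ (m+1-K) : ℕ) : ℝ) := by
    have hpow : (2:ℝ) ^ (m+1) = 2 ^ K * 2 ^ (m+1-K) := by rw [← pow_add]; congr 1; omega
    push_cast
    rw [hpow]
    field_simp
  rw [tdig, h1, Int.floor_natCast]
  have : (2:ℤ) ∣ (p * 2 ^ (m+1-K) : ℕ) := by
    have : (2:ℕ) ∣ p * 2 ^ (m+1-K) := Dvd.dvd.mul_left (dvd_pow_self 2 (by omega)) p
    exact_mod_cast this
  rw [Int.emod_eq_zero_of_dvd this]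
  rfl

lemma betaC_pm (t : ℝ) (j : ℕ) : betaC t j = 1 ∨ betaC t j = -1 := by
  rw [betaC]
  split <;> rcases Nat.even_or_odd (tdig t 0) with h | h <;>
    first
      | (left; exact Even.neg_one_pow ‹_›)
      | (right; exact Odd.neg_one_pow ‹_›)
      | (rcases Nat.even_or_odd (tdig t (Nat.log 2 j + 1)) with h2 | h2
         · left; exact Even.neg_one_pow h2
         · right; exact Odd.neg_one_pow h2)

lemma betaC_one (p K j : ℕ) (hj : 2^K ≤ j) : betaC ((p:ℝ)/2^K) j = 1 := by
  have hj0 : j ≠ 0 := by have := Nat.two_pow_pos K; omega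
  rw [betaC, if_neg hj0]
  have hlog : K ≤ Nat.log 2 j := Nat.le_log_of_pow_le (by norm_num) hj
  rw [tdig_eq_zero p K _ (by omega)]
  simp

def Qker (t : ℝ) (n : ℕ) (y : G) : ℝ :=
  ∑ k ∈ Finset.range n, ∑ j ∈ Finset.range k, betaC t j * walsh j y

lemma betaC_abs_le (t : ℝ) (j : ℕ) : |betaC t j| ≤ 1 := by
  rcases betaC_pm t j with h | h <;> rw [h] <;> norm_num

lemma measurable_Qker (t : ℝ) (n : ℕ) : Measurable (Qker t n) := by
  refine Finset.measurable_sum _ (fun k _ => Finset.measurable_sum _ (fun j _ => ?_))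
  exact (measurable_walsh j).const_mul _

lemma Qker_abs_le (t : ℝ) (n : ℕ) (y : G) : |Qker t n y| ≤ n * n := by
  calc |Qker t n y| ≤ ∑ k ∈ Finset.range n, |∑ j ∈ Finset.range k, betaC t j * walsh j y| :=
        Finset.abs_sum_le_sum_abs _ _
  _ ≤ ∑ k ∈ Finset.range n, (n:ℝ) := by
      refine Finset.sum_le_sum (fun k hk => ?_)
      calc |∑ j ∈ Finset.range k, betaC t j * walsh j y|
          ≤ ∑ j ∈ Finset.range k, |betaC t j * walsh j y| := Finset.abs_sum_le_sum_abs _ _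
      _ ≤ ∑ j ∈ Finset.range k, 1 := by
          refine Finset.sum_le_sum (fun j _ => ?_)
          rw [abs_mul, walsh_abs, mul_one]
          exact betaC_abs_le t j
      _ = k := by simp
      _ ≤ (n:ℝ) := by exact_mod_cast le_of_lt (Finset.mem_range.1 hk)
  _ = n * n := by simp [mul_comm]

lemma Qker_dep (t : ℝ) (n : ℕ) (x y : G) (h : ∀ i < n, x i = y i) :
    Qker t n x = Qker t n y := by
  rw [Qker, Qker]
  refine Finset.sum_congr rfl (fun k hk => Finset.sum_congr rfl (fun j hj => ?_))
  rw [walsh_dep j n (by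
    have := Finset.mem_range.1 hk
    have := Finset.mem_range.1 hj
    omega) x y h]

lemma Qker_sub_Afun (t : ℝ) (M n : ℕ) (hβ : ∀ j, M ≤ j → betaC t j = 1) (y : G) :
    |Qker t n y - Afun n y| ≤ 2 * M * n := by
  have key : ∀ k : ℕ, |∑ j ∈ Finset.range k, betaC t j * walsh j y - Dir k y| ≤ 2 * M := by
    intro k
    have : ∑ j ∈ Finset.range k, betaC t j * walsh j y - Dir k y
        = ∑ j ∈ Finset.range k, (betaC t j - 1) * walsh j y := by
      rw [Dir, ← Finset.sum_sub_distrib]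
      refine Finset.sum_congr rfl (fun j _ => by ring)
    rw [this]
    calc |∑ j ∈ Finset.range k, (betaC t j - 1) * walsh j y|
        ≤ ∑ j ∈ Finset.range k, |(betaC t j - 1) * walsh j y| := Finset.abs_sum_le_sum_abs _ _
    _ ≤ ∑ j ∈ Finset.range k, (if j < M then 2 else 0) := by
        refine Finset.sum_le_sum (fun j _ => ?_)
        rw [abs_mul, walsh_abs, mul_one]
        by_cases hj : j < M
        · rw [if_pos hj]
          have := betaC_abs_le t j
          rw [abs_le] at this
          rw [abs_le]
          constructor <;> linarith
        · rw [if_neg hj, hβ j (le_of_not_gt hj)]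
          simp
    _ = 2 * ((Finset.range k).filter (fun j => j < M)).card := by
        rw [Finset.sum_ite, Finset.sum_const, Finset.sum_const]
        simp [mul_comm]
    _ ≤ 2 * M := by
        have : ((Finset.range k).filter (fun j => j < M)).card ≤ M := by
          calc ((Finset.range k).filter (fun j => j < M)).card
              ≤ (Finset.range M).card := by
                apply Finset.card_le_card
                intro j hj
                simp only [Finset.mem_filter, Finset.mem_range] at hj ⊢
                exact hj.2
          _ = M := Finset.card_range M
        have h2 : (((Finset.range k).filter (fun j => j < M)).card : ℝ) ≤ M := by exact_mod_cast this
        linarith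
  calc |Qker t n y - Afun n y|
      = |∑ k ∈ Finset.range n, (∑ j ∈ Finset.range k, betaC t j * walsh j y - Dir k y)| := by
        rw [Qker, Afun, ← Finset.sum_sub_distrib]
  _ ≤ ∑ k ∈ Finset.range n, |∑ j ∈ Finset.range k, betaC t j * walsh j y - Dir k y| :=
        Finset.abs_sum_le_sum_abs _ _
  _ ≤ ∑ k ∈ Finset.range n, (2 * M : ℝ) := Finset.sum_le_sum (fun k _ => key k)
  _ = 2 * M * n := by
        rw [Finset.sum_const, Finset.card_range, nsmul_eq_mul]
        ring

lemma integral_abs_Qker (t : ℝ) (M n : ℕ) (hβ : ∀ j, M ≤ j → betaC t j = 1) :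
    ∫ y, |Qker t n y| ∂muG ≤ 4 * n + 2 * M * n := by
  have hpt : ∀ y, |Qker t n y| ≤ |Afun n y| + 2 * M * n := by
    intro y
    have h1 := Qker_sub_Afun t M n hβ y
    have := abs_sub_abs_le_abs_sub (Qker t n y) (Afun n y)
    linarith
  have hint1 : Integrable (fun y => |Qker t n y|) muG :=
    (integrable_of_bounded _ (measurable_Qker t n) (n*n) (Qker_abs_le t n)).abs
  have hint2 : Integrable (fun y => |Afun n y| + 2 * M * n) muG :=
    (integrable_Afun n).abs.add (integrable_const _)
  calc ∫ y, |Qker t n y| ∂muG ≤ ∫ y, (|Afun n y| + 2 * M * n) ∂muG :=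
        integral_mono hint1 hint2 hpt
  _ = (∫ y, |Afun n y| ∂muG) + 2 * M * n := by
      rw [integral_add (integrable_Afun n).abs (integrable_const _), integral_const]
      simp
  _ ≤ 4 * n + 2 * M * n := by
      have := integral_abs_Afun n
      linarith

lemma integrable_mul_walsh (f : G → ℝ) (hf : Integrable f muG) (j : ℕ) :
    Integrable (fun u => f u * walsh j u) muG := by
  have h := hf.bdd_mul (measurable_walsh j).aestronglyMeasurable
    (Filter.Eventually.of_forall (fun x => by rw [Real.norm_eq_abs]; exact walsh_le_one j x))
  exact h.congr (Filter.Eventually.of_forall (fun x => by ring))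

lemma sigmaT_repr (t : ℝ) (f : G → ℝ) (hf : Integrable f muG) (n : ℕ) (x : G) :
    sigmaT t f n x = (1 / (n:ℝ)) * ∫ u, f u * Qker t n (x + u) ∂muG := by
  have h1 : ∀ u, f u * Qker t n (x + u)
      = ∑ k ∈ Finset.range n, ∑ j ∈ Finset.range k,
          (betaC t j * walsh j x) * (f u * walsh j u) := by
    intro u
    rw [Qker, Finset.mul_sum]
    refine Finset.sum_congr rfl (fun k _ => ?_)
    rw [Finset.mul_sum]
    refine Finset.sum_congr rfl (fun j _ => ?_)
    rw [walsh_mul]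
    ring
  have h2 : ∫ u, f u * Qker t n (x + u) ∂muG
      = ∑ k ∈ Finset.range n, ∑ j ∈ Finset.range k, (betaC t j * walsh j x) * fcoef f j := by
    rw [integral_congr_ae (Filter.Eventually.of_forall h1)]
    rw [integral_finset_sum _ (fun k _ => ?_)]
    · refine Finset.sum_congr rfl (fun k _ => ?_)
      rw [integral_finset_sum _ (fun j _ => ((integrable_mul_walsh f hf j).const_mul _))]
      refine Finset.sum_congr rfl (fun j _ => ?_)
      rw [MeasureTheory.integral_const_mul, fcoef]
    · exact integrable_finset_sum _ (fun j _ => ((integrable_mul_walsh f hf j).const_mul _))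
  rw [h2, sigmaT]
  congr 1
  refine Finset.sum_congr rfl (fun k _ => ?_)
  rw [Stilde]
  refine Finset.sum_congr rfl (fun j _ => ?_)
  ring

lemma measurable_addG2 : Measurable (fun z : G × G => z.1 + z.2) := by
  refine measurable_pi_lambda _ (fun i => ?_)
  have h1 : Measurable (fun z : G × G => (z.1 i, z.2 i)) :=
    ((measurable_pi_apply i).comp measurable_fst).prodMk
      ((measurable_pi_apply i).comp measurable_snd)
  exact (Measurable.of_discrete (f := fun p : ZMod 2 × ZMod 2 => p.1 + p.2)).comp h1

lemma measurable_sigmaT (t : ℝ) (f : G → ℝ) (n : ℕ) : Measurable (sigmaT t f n) := by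
  have : sigmaT t f n = fun x => (1 / (n : ℝ)) * ∑ k ∈ Finset.range n, Stilde t f k x := rfl
  rw [this]
  refine (Finset.measurable_sum _ (fun k _ => ?_)).const_mul _
  refine Finset.measurable_sum _ (fun j _ => ?_)
  exact (measurable_walsh j).const_mul _

lemma sigmaT_bound (t : ℝ) (f : G → ℝ) (n : ℕ) (x : G) :
    |sigmaT t f n x| ≤ (1/(n:ℝ)) * ∑ k ∈ Finset.range n, ∑ j ∈ Finset.range k,
      |betaC t j * fcoef f j| := by
  rw [sigmaT, abs_mul, abs_of_nonneg (by positivity : (0:ℝ) ≤ 1/(n:ℝ))]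
  apply mul_le_mul_of_nonneg_left _ (by positivity)
  calc |∑ k ∈ Finset.range n, Stilde t f k x|
      ≤ ∑ k ∈ Finset.range n, |Stilde t f k x| := Finset.abs_sum_le_sum_abs _ _
  _ ≤ ∑ k ∈ Finset.range n, ∑ j ∈ Finset.range k, |betaC t j * fcoef f j| := by
      refine Finset.sum_le_sum (fun k _ => ?_)
      rw [Stilde]
      calc |∑ j ∈ Finset.range k, betaC t j * fcoef f j * walsh j x|
          ≤ ∑ j ∈ Finset.range k, |betaC t j * fcoef f j * walsh j x| :=
            Finset.abs_sum_le_sum_abs _ _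
      _ = ∑ j ∈ Finset.range k, |betaC t j * fcoef f j| := by
          refine Finset.sum_congr rfl (fun j _ => ?_)
          rw [abs_mul, walsh_abs, mul_one]

/-- For dyadic rational `t`, the conjugate Fejér means are uniformly `L¹`-bounded:
`E|σ̃_n^{(t)} f| ≤ C E|f|`. -/
theorem sigmaT_L1_bound (t : ℝ) (ht : t ∈ Set.Ico (0:ℝ) 1) (hd : IsDyadicRat t) :
    ∃ C : ℝ, ∀ f : G → ℝ, Integrable f muG → ∀ n : ℕ, 1 ≤ n →
      ∫ x, |sigmaT t f n x| ∂muG ≤ C * ∫ x, |f x| ∂muG := by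
  obtain ⟨p, K, hpK⟩ := hd
  refine ⟨4 + 2 * (2^K : ℕ), ?_⟩
  intro f hf n hn
  set M : ℕ := 2 ^ K with hM
  have hβ : ∀ j, M ≤ j → betaC t j = 1 := by
    intro j hj
    rw [hpK]
    exact betaC_one p K j hj
  have hnR : (1:ℝ) ≤ (n:ℝ) := by exact_mod_cast hn
  have hnpos : (0:ℝ) < (n:ℝ) := by linarith
  -- the product function
  set F : G × G → ℝ := fun z => |f z.2| * |Qker t n (z.1 + z.2)| with hF
  have hFmeas : AEStronglyMeasurable F (muG.prod muG) := by
    refine AEStronglyMeasurable.mul ?_ ?_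
    · exact hf.abs.aestronglyMeasurable.comp_snd
    · exact (((measurable_Qker t n).comp measurable_addG2).abs).aestronglyMeasurable
  have hFint : Integrable F (muG.prod muG) := by
    refine Integrable.mono' ((integrable_const ((n:ℝ)*n)).mul_prod hf.abs) hFmeas ?_
    refine Filter.Eventually.of_forall (fun z => ?_)
    rw [Real.norm_eq_abs, hF]
    simp only
    rw [abs_mul, abs_abs, abs_abs]
    calc |f z.2| * |Qker t n (z.1 + z.2)| ≤ |f z.2| * ((n:ℝ)*n) :=
          mul_le_mul_of_nonneg_left (Qker_abs_le t n _) (abs_nonneg _)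
    _ = (n:ℝ)*n * |f z.2| := by ring
  -- pointwise bound on sigmaT
  have hpt : ∀ x, |sigmaT t f n x| ≤ (1/(n:ℝ)) * ∫ u, |f u| * |Qker t n (x + u)| ∂muG := by
    intro x
    rw [sigmaT_repr t f hf n x, abs_mul, abs_of_nonneg (by positivity : (0:ℝ) ≤ 1/(n:ℝ))]
    apply mul_le_mul_of_nonneg_left _ (by positivity)
    have := MeasureTheory.norm_integral_le_integral_norm
      (μ := muG) (f := fun u => f u * Qker t n (x+u))
    simpa [Real.norm_eq_abs, abs_mul] using this
  have hInt0 : Integrable (fun x => |sigmaT t f n x|) muG :=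
    ((integrable_of_bounded _ (measurable_sigmaT t f n) _
      (sigmaT_bound t f n))).abs
  have hInt1 : Integrable (fun x => (1/(n:ℝ)) * ∫ u, F (x, u) ∂muG) muG :=
    (hFint.integral_prod_left).const_mul _
  -- translation invariance for the kernel integral
  have htrans : ∀ u : G, ∫ x, |Qker t n (x + u)| ∂muG = ∫ y, |Qker t n y| ∂muG := by
    intro u
    exact integral_translate n (fun y => |Qker t n y|) (measurable_Qker t n).abs
      (fun x y h => by
        show |Qker t n x| = |Qker t n y|
        rw [Qker_dep t n x y h]) u
  set L : ℝ := ∫ y, |Qker t n y| ∂muG with hL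
  have hLle : L ≤ 4 * n + 2 * M * n := integral_abs_Qker t M n hβ
  calc ∫ x, |sigmaT t f n x| ∂muG
      ≤ ∫ x, ((1/(n:ℝ)) * ∫ u, F (x, u) ∂muG) ∂muG := integral_mono hInt0 hInt1 hpt
  _ = (1/(n:ℝ)) * ∫ x, (∫ u, F (x, u) ∂muG) ∂muG := MeasureTheory.integral_const_mul _ _
  _ = (1/(n:ℝ)) * ∫ u, (∫ x, F (x, u) ∂muG) ∂muG := by
      rw [integral_integral_swap (by exact hFint)]
  _ = (1/(n:ℝ)) * ∫ u, |f u| * L ∂muG := by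
      congr 1
      refine integral_congr_ae (Filter.Eventually.of_forall (fun u => ?_))
      rw [hF]
      simp only
      rw [MeasureTheory.integral_const_mul, htrans u]
  _ = (1/(n:ℝ)) * (L * ∫ u, |f u| ∂muG) := by
      rw [integral_congr_ae (Filter.Eventually.of_forall (fun u => mul_comm (|f u|) L)),
        MeasureTheory.integral_const_mul]
  _ ≤ (4 + 2 * (M:ℕ)) * ∫ x, |f x| ∂muG := by
      have hfnonneg : 0 ≤ ∫ u, |f u| ∂muG := integral_nonneg (fun u => abs_nonneg _)
      have h1 : (1/(n:ℝ)) * L ≤ 4 + 2 * (M:ℕ) := by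
        rw [div_mul_eq_mul_div, one_mul, div_le_iff₀ hnpos]
        calc L ≤ 4 * n + 2 * M * n := hLle
        _ = (4 + 2 * (M:ℕ)) * n := by ring
      calc (1/(n:ℝ)) * (L * ∫ u, |f u| ∂muG) = ((1/(n:ℝ)) * L) * ∫ u, |f u| ∂muG := by ring
      _ ≤ (4 + 2 * (M:ℕ)) * ∫ x, |f x| ∂muG := mul_le_mul_of_nonneg_right h1 hfnonneg
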